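/- If κ is weakly compact, then there is no nonreflecting stationary subset of κ: every stationary S ⊆ κ reflects, i.e., there is a regular α < κ such that S ∩ α is stationary in α. -/

import Mathlib

open Cardinal

/-- `C` is club (closed unbounded) below the ordinal `o`. -/
def IsClubBelow (C : Set Ordinal) (o : Ordinal) : Prop :=
  C ⊆ Set.Iio o ∧ (∀ a < o, ∃ b ∈ C, a < b) ∧
  ∀ a, a < o → a ≠ 0 → (∀ b < a, ∃ c ∈ C, b < c ∧ c < a) → a ∈ C

/-- `S` is stationary below the ordinal `o`. -/
def IsStationaryBelow (S : Set Ordinal) (o : Ordinal) : Prop :=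
  ∀ C, IsClubBelow C o → (S ∩ C).Nonempty


/-- `(T, lt, ht)` is a tree of height `κ` with levels of size `< κ`: `lt` is a strict
order whose predecessor sets are chains meeting each lower level exactly once, `ht`
is the height function, all levels below `κ` are realized and have size `< κ`. -/
def IsKappaTree (κ : Cardinal.{0}) (T : Type) (lt : T → T → Prop)
    (ht : T → Ordinal) : Prop :=
  (∀ t, ¬ lt t t) ∧ (∀ a b c, lt a b → lt b c → lt a c) ∧
  (∀ s t, lt s t → ht s < ht t) ∧
  (∀ t, ∀ o < ht t, ∃! s, lt s t ∧ ht s = o) ∧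
  (∀ t, ht t < κ.ord) ∧ (∀ o < κ.ord, ∃ t, ht t = o) ∧
  (∀ o : Ordinal, #{t : T // ht t = o} < κ)

/-- A cofinal branch: a chain meeting every level. -/
def HasCofinalBranch (κ : Cardinal.{0}) (T : Type) (lt : T → T → Prop)
    (ht : T → Ordinal) : Prop :=
  ∃ B : Set T, (∀ s ∈ B, ∀ t ∈ B, s = t ∨ lt s t ∨ lt t s) ∧
    ∀ o < κ.ord, ∃ t ∈ B, ht t = o

/-- The tree property at `κ`: every tree of height `κ` with levels of size `< κ` has a
cofinal branch. -/
def TreeProperty (κ : Cardinal.{0}) : Prop :=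
  ∀ (T : Type) (lt : T → T → Prop) (ht : T → Ordinal),
    IsKappaTree κ T lt ht → HasCofinalBranch κ T lt ht

/-- `κ` is inaccessible: regular, uncountable, strong limit. -/
def Inaccessible (κ : Cardinal.{0}) : Prop :=
  κ.IsRegular ∧ aleph 0 < κ ∧ ∀ μ < κ, (2 : Cardinal) ^ μ < κ

/-- `κ` is weakly compact: inaccessible with the tree property. -/
def WeaklyCompact (κ : Cardinal.{0}) : Prop :=
  Inaccessible κ ∧ TreeProperty κ

namespace SRProof

noncomputable section

variable {κ : Cardinal.{0}}


lemma lt_add_one' (a : Ordinal) : a < a + 1 := by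
  rw [Ordinal.add_one_eq_succ]; exact Order.lt_succ a

lemma succ_lt' {o a : Ordinal} (h : Order.IsSuccLimit o) (ha : a < o) : a + 1 < o := by
  rw [Ordinal.add_one_eq_succ]; exact h.succ_lt ha

lemma club_Iio (hκ : ℵ₀ ≤ κ) : IsClubBelow (Set.Iio κ.ord) κ.ord := by
  refine ⟨subset_rfl, fun a ha => ⟨a + 1, ?_, ?_⟩, fun a ha _ _ => ha⟩
  · exact succ_lt' (Cardinal.isSuccLimit_ord hκ) ha
  · exact lt_add_one' a

lemma club_Ioo (hκ : ℵ₀ ≤ κ) {β : Ordinal} (hβ : β < κ.ord) :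
    IsClubBelow (Set.Ioo β κ.ord) κ.ord := by
  refine ⟨fun x hx => hx.2, fun a ha => ?_, fun a ha h0 hap => ?_⟩
  · refine ⟨max β a + 1, ⟨?_, ?_⟩, ?_⟩
    · exact lt_of_le_of_lt (le_max_left _ _) (lt_add_one' _)
    · exact succ_lt' (Cardinal.isSuccLimit_ord hκ) (max_lt hβ ha)
    · exact lt_of_le_of_lt (le_max_right _ _) (lt_add_one' _)
  · obtain ⟨c, hc, _, hca⟩ := hap 0 (pos_iff_ne_zero.2 h0)
    exact ⟨hc.1.trans hca, ha⟩

lemma club_iInter (hreg : κ.IsRegular) (hκ : ℵ₀ < κ)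
    {ι : Type} (hι : #ι < κ) {C : ι → Set Ordinal}
    (hC : ∀ i, IsClubBelow (C i) κ.ord) :
    IsClubBelow (Set.Iio κ.ord ∩ ⋂ i, C i) κ.ord := by
  have hcof : κ.ord.cof = κ := hreg.cof_eq
  have hlim : Order.IsSuccLimit κ.ord := Cardinal.isSuccLimit_ord hreg.aleph0_le
  refine ⟨fun x hx => hx.1, ?_, ?_⟩
  · -- unbounded
    intro a ha
    have hnext : ∀ (i : ι) (x : Set.Iio κ.ord), ∃ c, c ∈ C i ∧ (x : Ordinal) < c ∧ c < κ.ord := by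
      intro i x
      obtain ⟨b, hb, hxb⟩ := (hC i).2.1 x x.2
      exact ⟨b, hb, hxb, (hC i).1 hb⟩
    choose nx hnx1 hnx2 hnx3 using hnext
    have hsup : ∀ x : Set.Iio κ.ord, (⨆ i, nx i x) < κ.ord := by
      intro x
      exact Ordinal.iSup_lt_ord (by rwa [hcof]) (fun i => hnx3 i x)
    have hg : ∀ x : Set.Iio κ.ord, max ((x : Ordinal) + 1) (⨆ i, nx i x) < κ.ord := by
      intro x
      exact max_lt (succ_lt' hlim x.2) (hsup x)
    set g : Set.Iio κ.ord → Set.Iio κ.ord := fun x => ⟨_, hg x⟩ with hgdef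
    have hgx : ∀ x : Set.Iio κ.ord, (x : Ordinal) < g x := fun x =>
      lt_of_lt_of_le (lt_add_one' (x : Ordinal)) (le_max_left _ _)
    set seq : ℕ → Set.Iio κ.ord := fun n => Nat.rec
      (⟨a + 1, succ_lt' hlim ha⟩) (fun _ x => g x) n
      with hseq
    have hseq0 : (seq 0 : Ordinal) = a + 1 := rfl
    have hseqS : ∀ n, seq (n + 1) = g (seq n) := fun n => rfl
    have hmono : ∀ n, (seq n : Ordinal) < seq (n + 1) := fun n => by
      rw [hseqS]; exact hgx (seq n)
    have hmono' : ∀ m n, m < n → (seq m : Ordinal) < seq n := by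
      intro m n h
      induction n with
      | zero => omega
      | succ k ih =>
        rcases Nat.lt_succ_iff_lt_or_eq.1 h with h' | h'
        · exact (ih h').trans (hmono k)
        · subst h'; exact hmono m
    have hb : (⨆ n, (seq n : Ordinal)) < κ.ord :=
      Ordinal.iSup_lt_ord (by rw [hcof]; exact (Cardinal.mk_eq_aleph0 ℕ) ▸ hκ)
        (fun n => (seq n).2)
    set b := ⨆ n, (seq n : Ordinal) with hbdef
    have hle : ∀ n, (seq n : Ordinal) ≤ b := fun n => Ordinal.le_iSup _ n
    have hblt : ∀ n, (seq n : Ordinal) < b := fun n =>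
      lt_of_lt_of_le (hmono n) (hle (n + 1))
    have hab : a < b := lt_of_lt_of_le (hseq0 ▸ lt_add_one' a) (hle 0)
    refine ⟨b, ⟨hb, Set.mem_iInter.2 fun i => ?_⟩, hab⟩
    refine (hC i).2.2 b hb (lt_of_le_of_lt (zero_le : (0 : Ordinal) ≤ a) hab).ne' ?_
    intro y hy
    obtain ⟨n, hn⟩ := Ordinal.lt_iSup_iff.1 hy
    refine ⟨nx i (seq n), hnx1 i (seq n), hn.trans (hnx2 i (seq n)), ?_⟩
    have h1 : nx i (seq n) ≤ (seq (n + 1) : Ordinal) := by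
      rw [hseqS]
      exact le_trans (Ordinal.le_iSup (fun j => nx j (seq n)) i) (le_max_right _ _)
    exact lt_of_le_of_lt h1 (hblt (n + 1))
  · -- closed
    intro a ha h0 hap
    refine ⟨ha, Set.mem_iInter.2 fun i => ?_⟩
    refine (hC i).2.2 a ha h0 ?_
    intro b hb
    obtain ⟨c, hc, hbc, hca⟩ := hap b hb
    exact ⟨c, (Set.mem_iInter.1 hc.2) i, hbc, hca⟩

/-- Accumulation (limit) points of `D` below `Θ`. -/
def accBelow (D : Set Ordinal) (Θ : Ordinal) : Set Ordinal :=
  {σ | σ < Θ ∧ σ ≠ 0 ∧ ∀ b < σ, ∃ δ ∈ D, b < δ ∧ δ < σ}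

lemma club_accBelow (hreg : κ.IsRegular) (hκ : ℵ₀ < κ) {D : Set Ordinal}
    (hD : ∀ a < κ.ord, ∃ δ ∈ D, a < δ ∧ δ < κ.ord) :
    IsClubBelow (accBelow D κ.ord) κ.ord := by
  have hcof : κ.ord.cof = κ := hreg.cof_eq
  refine ⟨fun x hx => hx.1, ?_, ?_⟩
  · intro a ha
    have hnext : ∀ x : Set.Iio κ.ord, ∃ δ, δ ∈ D ∧ (x : Ordinal) < δ ∧ δ < κ.ord := by
      intro x
      obtain ⟨δ, h1, h2, h3⟩ := hD x x.2
      exact ⟨δ, h1, h2, h3⟩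
    choose nx hnx1 hnx2 hnx3 using hnext
    set seq : ℕ → Set.Iio κ.ord := fun n => Nat.rec
      (⟨nx ⟨a, ha⟩, hnx3 _⟩) (fun _ x => ⟨nx x, hnx3 x⟩) n with hseq
    have hseqS : ∀ n, (seq (n + 1) : Ordinal) = nx (seq n) := fun n => rfl
    have hseq0 : (seq 0 : Ordinal) = nx ⟨a, ha⟩ := rfl
    have hmem : ∀ n, (seq n : Ordinal) ∈ D := by
      intro n; cases n with
      | zero => exact hnx1 _
      | succ k => rw [hseqS]; exact hnx1 _
    have hmono : ∀ n, (seq n : Ordinal) < seq (n + 1) := fun n => by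
      rw [hseqS]; exact hnx2 (seq n)
    have hb : (⨆ n, (seq n : Ordinal)) < κ.ord :=
      Ordinal.iSup_lt_ord (by rw [hcof]; exact (Cardinal.mk_eq_aleph0 ℕ) ▸ hκ)
        (fun n => (seq n).2)
    set b := ⨆ n, (seq n : Ordinal) with hbdef
    have hle : ∀ n, (seq n : Ordinal) ≤ b := fun n => Ordinal.le_iSup _ n
    have hblt : ∀ n, (seq n : Ordinal) < b := fun n =>
      lt_of_lt_of_le (hmono n) (hle (n + 1))
    have hab : a < b := lt_of_lt_of_le (hseq0 ▸ hnx2 ⟨a, ha⟩) (hle 0)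
    refine ⟨b, ⟨hb, (lt_of_le_of_lt (zero_le : (0 : Ordinal) ≤ a) hab).ne', ?_⟩, hab⟩
    intro y hy
    obtain ⟨n, hn⟩ := Ordinal.lt_iSup_iff.1 hy
    exact ⟨seq (n + 1), hmem (n + 1), hn.trans (hmono n), hblt (n + 1)⟩
  · intro a ha h0 hap
    refine ⟨ha, h0, ?_⟩
    intro b hb
    obtain ⟨c, hc, hbc, hca⟩ := hap b hb
    obtain ⟨δ, hδD, hδ1, hδ2⟩ := hc.2.2 b hbc
    exact ⟨δ, hδD, hδ1, hδ2.trans hca⟩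

lemma stat_mono {X Y : Set Ordinal} {Θ : Ordinal} (hXY : X ⊆ Y)
    (hX : IsStationaryBelow X Θ) : IsStationaryBelow Y Θ := by
  intro C hCc
  obtain ⟨x, hx1, hx2⟩ := hX C hCc
  exact ⟨x, hXY hx1, hx2⟩

lemma mk_arrow_bool {γ : Type} : #(γ → Bool) = (2 : Cardinal) ^ #γ := by
  rw [← Cardinal.mk_bool, Cardinal.power_def]

lemma exists_decision (hreg : κ.IsRegular) (hκ : ℵ₀ < κ)
    (hsl : ∀ μ < κ, (2 : Cardinal) ^ μ < κ)
    (htp : TreeProperty κ) (A : κ.ord.ToType → Set Ordinal) :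
    ∃ dec : κ.ord.ToType → Bool,
      ∀ (ι : Type) (j : ι → κ.ord.ToType), #ι < κ →
        IsStationaryBelow {α | ∀ i, α ∈ A (j i) ↔ dec (j i) = true} κ.ord := by
  classical
  have hℵ : ℵ₀ ≤ κ := hκ.le
  have hlim : Order.IsSuccLimit κ.ord := Cardinal.isSuccLimit_ord hℵ
  have hcof : κ.ord.cof = κ := hreg.cof_eq
  set e := (Ordinal.ToType.mk (o := κ.ord)) with he
  set ov : κ.ord.ToType → Ordinal := fun i => ((e.symm i : Set.Iio κ.ord) : Ordinal) with hov
  have hovlt : ∀ i, ov i < κ.ord := fun i => (e.symm i).2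
  have hovinj : Function.Injective ov := by
    intro i j h
    have : e.symm i = e.symm j := Subtype.ext h
    exact e.symm.injective this
  have hovsurj : ∀ o : Ordinal, o < κ.ord → ∃ i, ov i = o := by
    intro o ho
    exact ⟨e ⟨o, ho⟩, by simp [hov]⟩
  -- counting initial segments
  have hcount : ∀ o : Ordinal, o < κ.ord → #{i : κ.ord.ToType // ov i < o} = o.card := by
    intro o ho
    have E1 : {i : κ.ord.ToType // ov i < o} ≃ {y : Set.Iio κ.ord // (y : Ordinal) < o} :=
      e.symm.toEquiv.subtypeEquiv (fun i => Iff.rfl)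
    have E2 : {y : Set.Iio κ.ord // (y : Ordinal) < o} ≃ Set.Iio o :=
      { toFun := fun y => ⟨y.1.1, y.2⟩
        invFun := fun z => ⟨⟨z.1, lt_trans z.2 ho⟩, z.2⟩
        left_inv := fun y => by ext; rfl
        right_inv := fun z => by ext; rfl }
    have E3 : Set.Iio o ≃ o.ToType := ((Ordinal.ToType.mk (o := o))).toEquiv
    rw [Cardinal.mk_congr ((E1.trans E2).trans E3), Cardinal.mk_toType]
  -- normalization and prefixes
  set Pf : Ordinal → (κ.ord.ToType → Bool) → Prop :=
    fun o p => ∀ i, ¬ ov i < o → p i = false with hPf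
  set Pre : Ordinal → (κ.ord.ToType → Bool) → Set Ordinal := fun o p =>
    {α | ∀ i, ov i < o → (α ∈ A i ↔ p i = true)} with hPre
  have hPatCount : ∀ o : Ordinal, o < κ.ord → #{p : κ.ord.ToType → Bool // Pf o p} < κ := by
    intro o ho
    have hinj : Function.Injective
        (fun p : {p : κ.ord.ToType → Bool // Pf o p} =>
          (fun i : {i : κ.ord.ToType // ov i < o} => p.1 i.1)) := by
      intro p q h
      apply Subtype.ext
      funext i
      by_cases hi : ov i < o
      · exact congrFun h ⟨i, hi⟩
      · rw [p.2 i hi, q.2 i hi]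
    calc #{p : κ.ord.ToType → Bool // Pf o p}
        ≤ #({i : κ.ord.ToType // ov i < o} → Bool) := Cardinal.mk_le_of_injective hinj
      _ = (2 : Cardinal) ^ o.card := by rw [mk_arrow_bool, hcount o ho]
      _ < κ := hsl _ ((Cardinal.lt_ord).1 ho)
  -- realization: at each level there is a stationary pattern class
  have hreal : ∀ o : Ordinal, o < κ.ord →
      ∃ p, Pf o p ∧ IsStationaryBelow (Pre o p) κ.ord := by
    intro o ho
    by_contra hcon
    push_neg at hcon
    have hcl : ∀ p : {p : κ.ord.ToType → Bool // Pf o p},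
        ∃ C, IsClubBelow C κ.ord ∧ Pre o p.1 ∩ C = ∅ := by
      intro p
      have := hcon p.1 p.2
      rw [IsStationaryBelow] at this
      push_neg at this
      obtain ⟨C, hC, hCe⟩ := this
      exact ⟨C, hC, hCe⟩
    choose Cp hCp1 hCp2 using hcl
    have hclub := club_iInter hreg hκ (hPatCount o ho) hCp1
    have h0 : (0 : Ordinal) < κ.ord := hreg.ord_pos
    obtain ⟨x, hx, _⟩ := hclub.2.1 0 h0
    set px : κ.ord.ToType → Bool := fun i => if ov i < o then decide (x ∈ A i) else false with hpx
    have hpxPf : Pf o px := fun i hi => by simp [hpx, hi]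
    have hxPre : x ∈ Pre o px := by
      intro i hi
      simp [hpx, hi]
    have hxC : x ∈ Cp ⟨px, hpxPf⟩ := Set.mem_iInter.1 hx.2 ⟨px, hpxPf⟩
    have := hCp2 ⟨px, hpxPf⟩
    rw [Set.eq_empty_iff_forall_notMem] at this
    exact this x ⟨hxPre, hxC⟩
  -- the tree
  set Node : κ.ord.ToType × (κ.ord.ToType → Bool) → Prop := fun x =>
    Pf (ov x.1) x.2 ∧ IsStationaryBelow (Pre (ov x.1) x.2) κ.ord with hNode
  set T := {x : κ.ord.ToType × (κ.ord.ToType → Bool) // Node x} with hT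
  set ht : T → Ordinal := fun t => ov t.1.1 with hht
  set tlt : T → T → Prop := fun s t =>
    ht s < ht t ∧ ∀ i, ov i < ht s → s.1.2 i = t.1.2 i with htlt
  have hmkNode : ∀ (a : κ.ord.ToType) (p : κ.ord.ToType → Bool),
      Pf (ov a) p → IsStationaryBelow (Pre (ov a) p) κ.ord → Node (a, p) := by
    intro a p h1 h2; exact ⟨h1, h2⟩
  have htree : IsKappaTree κ T tlt ht := by
    refine ⟨?_, ?_, ?_, ?_, ?_, ?_, ?_⟩
    · exact fun t h => lt_irrefl _ h.1
    · intro a b c hab hbc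
      exact ⟨hab.1.trans hbc.1, fun i hi =>
        (hab.2 i hi).trans (hbc.2 i (hi.trans hab.1))⟩
    · exact fun s t h => h.1
    · -- predecessors exist and are unique
      intro t o ho
      have hoΘ : o < κ.ord := ho.trans (hovlt t.1.1)
      obtain ⟨a, ha⟩ := hovsurj o hoΘ
      set q : κ.ord.ToType → Bool := fun i => if ov i < o then t.1.2 i else false with hq
      have hqPf : Pf o q := fun i hi => by simp [hq, hi]
      have hsub : Pre (ov t.1.1) t.1.2 ⊆ Pre o q := by
        intro α hα i hi
        have : q i = t.1.2 i := by simp [hq, hi]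
        rw [this]
        exact hα i (hi.trans ho)
      have hstatq : IsStationaryBelow (Pre o q) κ.ord := stat_mono hsub t.2.2
      have hnq : Node (a, q) := hmkNode a q (by rw [ha]; exact hqPf) (by rw [ha]; exact hstatq)
      refine ⟨⟨(a, q), hnq⟩, ⟨⟨?_, ?_⟩, ?_⟩, ?_⟩
      · show ov a < ht t
        rw [ha]; exact ho
      · intro i hi
        have hio : ov i < o := by rw [hht] at hi; simpa [ha] using hi
        show q i = t.1.2 i
        simp [hq, hio]
      · show ov a = o
        exact ha
      · rintro s ⟨hslt, hsht⟩
        apply Subtype.ext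
        have hfst : s.1.1 = a := hovinj (hsht.trans ha.symm)
        have hsnd : s.1.2 = q := by
          funext i
          by_cases hio : ov i < o
          · have := hslt.2 i (hio.trans_eq hsht.symm)
            rw [this]; simp [hq, hio]
          · have := s.2.1 i (fun h => hio (h.trans_eq hsht))
            rw [this]; simp [hq, hio]
        calc s.1 = (s.1.1, s.1.2) := rfl
          _ = (a, q) := by rw [hfst, hsnd]
    · exact fun t => hovlt t.1.1
    · intro o ho
      obtain ⟨p, hp1, hp2⟩ := hreal o ho
      obtain ⟨a, ha⟩ := hovsurj o ho
      exact ⟨⟨(a, p), hmkNode a p (by rw [ha]; exact hp1) (by rw [ha]; exact hp2)⟩, ha⟩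
    · -- level counting
      intro o
      by_cases ho : o < κ.ord
      · have hinj : Function.Injective
            (fun t : {t : T // ht t = o} =>
              (fun i : {i : κ.ord.ToType // ov i < o} => t.1.1.2 i.1)) := by
          intro t s h
          apply Subtype.ext
          apply Subtype.ext
          have hfst : t.1.1.1 = s.1.1.1 := hovinj (t.2.trans s.2.symm)
          have hsnd : t.1.1.2 = s.1.1.2 := by
            funext i
            by_cases hio : ov i < o
            · exact congrFun h ⟨i, hio⟩
            · rw [t.1.2.1 i (fun hlt => hio (hlt.trans_eq t.2)),
                s.1.2.1 i (fun hlt => hio (hlt.trans_eq s.2))]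
          calc t.1.1 = (t.1.1.1, t.1.1.2) := rfl
            _ = (s.1.1.1, s.1.1.2) := by rw [hfst, hsnd]
            _ = s.1.1 := rfl
        calc #{t : T // ht t = o}
            ≤ #({i : κ.ord.ToType // ov i < o} → Bool) := Cardinal.mk_le_of_injective hinj
          _ = (2 : Cardinal) ^ o.card := by rw [mk_arrow_bool, hcount o ho]
          _ < κ := hsl _ ((Cardinal.lt_ord).1 ho)
      · have : IsEmpty {t : T // ht t = o} := ⟨fun t => ho (t.2 ▸ hovlt t.1.1.1)⟩
        rw [Cardinal.mk_eq_zero]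
        exact hreg.pos
  -- apply the tree property
  obtain ⟨B, hchain, hlev⟩ := htp T tlt ht htree
  have hlev' : ∀ o : Ordinal, o < κ.ord → ∃ t, t ∈ B ∧ ht t = o := by
    intro o ho
    obtain ⟨t, h1, h2⟩ := hlev o ho
    exact ⟨t, h1, h2⟩
  choose tb htbB htbht using hlev'
  set dec : κ.ord.ToType → Bool := fun i =>
    (tb (ov i + 1) (succ_lt' hlim (hovlt i))).1.2 i with hdec
  have hcoh : ∀ t, t ∈ B → ∀ i, ov i < ht t → t.1.2 i = dec i := by
    intro t htB i hi
    set t' := tb (ov i + 1) (succ_lt' hlim (hovlt i)) with ht'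
    have ht'B : t' ∈ B := htbB _ _
    have ht'h : ht t' = ov i + 1 := htbht _ _
    rcases hchain t htB t' ht'B with h | h | h
    · exact h ▸ rfl
    · exact h.2 i hi
    · exact (h.2 i (by rw [ht'h]; exact lt_add_one' _)).symm
  refine ⟨dec, ?_⟩
  intro ι j hι
  have hsuplt : (⨆ i, (ov (j i) + 1)) < κ.ord :=
    Ordinal.iSup_lt_ord (by rwa [hcof]) (fun i => succ_lt' hlim (hovlt (j i)))
  set t := tb _ hsuplt with htdef
  have htB : t ∈ B := htbB _ _
  have hth : ht t = ⨆ i, (ov (j i) + 1) := htbht _ _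
  refine stat_mono ?_ t.2.2
  intro α hα i
  have h2 : ov (j i) < ht t := by
    rw [hth]
    exact lt_of_lt_of_le (lt_add_one' _) (Ordinal.le_iSup _ i)
  rw [← hcoh t htB (j i) h2]
  exact hα (j i) h2



def ovo (o : Ordinal) : o.ToType → Ordinal := fun i => (((Ordinal.ToType.mk (o := o))).symm i : Ordinal)

lemma ovo_lt (o : Ordinal) (i : o.ToType) : ovo o i < o := (((Ordinal.ToType.mk (o := o))).symm i).2

lemma ovo_inj {o : Ordinal} : Function.Injective (ovo o) := fun i j h =>
  ((Ordinal.ToType.mk (o := o))).symm.injective (Subtype.ext h)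

lemma ovo_enum (o : Ordinal) (x : Ordinal) (h : x < o) :
    ovo o (((Ordinal.ToType.mk (o := o))) ⟨x, h⟩) = x := by
  simp [ovo]


lemma ovo_enum_inv {o : Ordinal} (i : o.ToType) (h : ovo o i < o) :
    ((Ordinal.ToType.mk (o := o))) ⟨ovo o i, h⟩ = i := by
  have : (⟨ovo o i, h⟩ : Set.Iio o) = ((Ordinal.ToType.mk (o := o))).symm i := Subtype.ext rfl
  rw [this]
  exact ((Ordinal.ToType.mk (o := o))).apply_symm_apply i

lemma mk_initialSeg {Θ : Ordinal} {o : Ordinal} (ho : o < Θ) :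
    #{i : Θ.ToType // ovo Θ i < o} = o.card := by
  have E1 : {i : Θ.ToType // ovo Θ i < o} ≃ {y : Set.Iio Θ // (y : Ordinal) < o} :=
    ((Ordinal.ToType.mk (o := Θ))).symm.toEquiv.subtypeEquiv (fun i => Iff.rfl)
  have E2 : {y : Set.Iio Θ // (y : Ordinal) < o} ≃ Set.Iio o :=
    { toFun := fun y => ⟨y.1.1, y.2⟩
      invFun := fun z => ⟨⟨z.1, lt_trans z.2 ho⟩, z.2⟩
      left_inv := fun y => by ext; rfl
      right_inv := fun z => by ext; rfl }
  have E3 : Set.Iio o ≃ o.ToType := ((Ordinal.ToType.mk (o := o))).toEquiv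
  rw [Cardinal.mk_congr ((E1.trans E2).trans E3), Cardinal.mk_toType]

theorem main (κ : Cardinal.{0})
    (hwc : (Cardinal.aleph 0 < κ ∧ κ.IsRegular ∧ (∀ μ < κ, (2 : Cardinal) ^ μ < κ)) ∧ TreeProperty κ)
    (S : Set Ordinal) (hS : S ⊆ Set.Iio κ.ord)
    (hstat : IsStationaryBelow S κ.ord) :
    ∃ α < κ.ord, α.card.ord = α ∧ α.card.IsRegular ∧
      IsStationaryBelow (S ∩ Set.Iio α) α := by
  classical
  obtain ⟨⟨hκa, hreg, hsl⟩, htp⟩ := hwc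
  have hκ : ℵ₀ < κ := by rwa [Cardinal.aleph_zero] at hκa
  have hℵ : ℵ₀ ≤ κ := hκ.le
  have hlim : Order.IsSuccLimit κ.ord := Cardinal.isSuccLimit_ord hℵ
  have hcof : κ.ord.cof = κ := hreg.cof_eq
  by_contra hCON
  push_neg at hCON
  -- regular-case avoiding clubs
  set RegC : Ordinal → Prop := fun α => α.card.ord = α ∧ α.card.IsRegular with hRegC
  have hEex : ∀ y : Ordinal, ∃ C : Set Ordinal,
      y < κ.ord → RegC y → IsClubBelow C y ∧ C ∩ S = ∅ := by
    intro y
    by_cases h : y < κ.ord ∧ RegC y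
    · have hns := hCON y h.1 h.2.1 h.2.2
      rw [IsStationaryBelow] at hns
      push_neg at hns
      obtain ⟨C, hC1, hC2⟩ := hns
      refine ⟨C, fun _ _ => ⟨hC1, ?_⟩⟩
      rw [Set.eq_empty_iff_forall_notMem]
      intro x ⟨hxC, hxS⟩
      have hxy : x < y := hC1.1 hxC
      have : x ∈ S ∩ Set.Iio y ∩ C := ⟨⟨hxS, hxy⟩, hxC⟩
      rw [hC2] at this
      exact this
    · exact ⟨∅, fun h1 h2 => absurd ⟨h1, h2⟩ h⟩
  choose E hE using hEex
  -- singular witnesses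
  have hWex : ∀ y : Ordinal, ∃ (ι : Type) (f : ι → Ordinal),
      Ordinal.lsub f = y ∧ #ι = y.cof := fun y => Ordinal.exists_lsub_cof y
  choose It ff hffl hffc using hWex
  set W : Ordinal → Set Ordinal := fun y =>
    if y < κ.ord ∧ RegC y then E y else {x | (∃ i, ff y i = x) ∧ y.cof.ord ≤ x} with hWdef
  have hWreg : ∀ y, y < κ.ord → RegC y → W y = E y := by
    intro y h1 h2; simp only [hWdef]; exact if_pos ⟨h1, h2⟩
  have hWsing : ∀ y, ¬ RegC y → W y = {x | (∃ i, ff y i = x) ∧ y.cof.ord ≤ x} := by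
    intro y h2; simp only [hWdef]; exact if_neg (fun h => h2 h.2)
  have hWsub : ∀ y, W y ⊆ Set.Iio y := by
    intro y x hx
    by_cases h : y < κ.ord ∧ RegC y
    · simp only [hWdef, if_pos h] at hx
      exact (hE y h.1 h.2).1.1 hx
    · simp only [hWdef, if_neg h] at hx
      obtain ⟨⟨i, hi⟩, _⟩ := hx
      have := Ordinal.lt_lsub (ff y) i
      rw [hffl y, hi] at this
      exact this
  have hcoford : ∀ y : Ordinal, Order.IsSuccLimit y → ¬ RegC y → y.cof.ord < y := by
    intro y hylim hnr
    rcases lt_or_eq_of_le (Cardinal.ord_card_le y) with h | h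
    · exact lt_of_le_of_lt (Cardinal.ord_le_ord.2 (Ordinal.cof_le_card y)) h
    · have hcard : ℵ₀ ≤ y.card := Ordinal.aleph0_le_card.2 (Ordinal.omega0_le_of_isSuccLimit hylim)
      have hirr : ¬ y.card.IsRegular := fun hr => hnr ⟨h, hr⟩
      have hlt : y.card.ord.cof < y.card :=
        lt_of_le_of_ne (Ordinal.cof_ord_le _) (fun h' => hirr ⟨hcard, h'.ge⟩)
      rw [h] at hlt
      conv_rhs => rw [← h]
      exact Cardinal.ord_lt_ord.2 hlt
  have hWunb : ∀ y, y < κ.ord → Order.IsSuccLimit y → ∀ γ < y, ∃ x ∈ W y, γ < x := by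
    intro y hy hylim γ hγ
    by_cases h : RegC y
    · rw [hWreg y hy h]
      exact (hE y hy h).1.2.1 γ hγ
    · have hcy : y.cof.ord < y := hcoford y hylim h
      have hb : max γ y.cof.ord + 1 < y := succ_lt' hylim (max_lt hγ hcy)
      have hb' : (max γ y.cof.ord + 1) < Ordinal.lsub (ff y) := by rw [hffl]; exact hb
      obtain ⟨i, hi⟩ := Ordinal.lt_lsub_iff.1 hb'
      refine ⟨ff y i, ?_, ?_⟩
      · rw [hWsing y h]
        exact ⟨⟨i, rfl⟩, le_trans (le_trans (le_max_right _ _) (le_of_lt (lt_add_one' _))) hi⟩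
      · exact lt_of_lt_of_le (lt_of_le_of_lt (le_max_left _ _) (lt_add_one' _)) hi
  -- function codes
  set FC : Type := List (Option κ.ord.ToType) with hFC
  set dF : FC → Ordinal → Ordinal := fun c => c.rec (fun α => α)
    (fun h _ g => fun α => match h with
      | none => Ordinal.pred (g α)
      | some γ => sInf {x | x ∈ W (g α) ∧ ovo κ.ord γ < x}) with hdF
  have hdFnil : ∀ α, dF [] α = α := fun _ => rfl
  have hdFpred : ∀ (L : FC) (α), dF (none :: L) α = Ordinal.pred (dF L α) := fun _ _ => rfl
  have hdFinf : ∀ (γ : κ.ord.ToType) (L : FC) (α),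
      dF (some γ :: L) α = sInf {x | x ∈ W (dF L α) ∧ ovo κ.ord γ < x} := fun _ _ _ => rfl
  have hdFle : ∀ (c : FC) (α), dF c α ≤ α := by
    intro c
    induction c with
    | nil => intro α; exact le_rfl
    | cons h L ih =>
      intro α
      match h with
      | none =>
        rw [hdFpred]
        exact le_trans (Ordinal.pred_le_self _) (ih α)
      | some γ =>
        rw [hdFinf]
        by_cases hne : {x | x ∈ W (dF L α) ∧ ovo κ.ord γ < x}.Nonempty
        · have hm := csInf_mem hne
          exact le_trans (le_of_lt ((hWsub _ hm.1).trans_le (ih α))) le_rfl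
        · rw [Set.not_nonempty_iff_eq_empty.1 hne, Ordinal.sInf_empty]
          exact (zero_le : (0 : Ordinal) ≤ α)
  -- measured family of codes
  set AC : Type := FC × FC × κ.ord.ToType × Fin 8 with hAC
  set decA : AC → Set Ordinal := fun c =>
    if c.2.2.2.1 = 0 then {α | dF c.1 α = ovo κ.ord c.2.2.1}
    else if c.2.2.2.1 = 1 then {α | ovo κ.ord c.2.2.1 < dF c.1 α}
    else if c.2.2.2.1 = 2 then {α | dF c.1 α < dF c.2.1 α}
    else if c.2.2.2.1 = 3 then {α | ovo κ.ord c.2.2.1 ∈ W (dF c.1 α)}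
    else if c.2.2.2.1 = 4 then {α | Order.IsSuccLimit (dF c.1 α) ∧ RegC (dF c.1 α)}
    else if c.2.2.2.1 = 5 then {α | Order.IsSuccLimit (dF c.1 α) ∧ ¬ RegC (dF c.1 α)}
    else if c.2.2.2.1 = 6 then {α | ¬ Order.IsSuccLimit (dF c.1 α) ∧ dF c.1 α ≠ 0}
    else ∅ with hdecA
  have hi0 : Nonempty κ.ord.ToType := by
    rw [Ordinal.toType_nonempty_iff_ne_zero]
    exact hreg.ord_pos.ne'
  set i0 : κ.ord.ToType := Classical.choice hi0 with hi0d
  set fibC : FC → κ.ord.ToType → AC := fun c δ => (c, c, δ, ⟨0, by norm_num⟩) with hfibC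
  set abvC : FC → κ.ord.ToType → AC := fun c ξ => (c, c, ξ, ⟨1, by norm_num⟩) with habvC
  set lttC : FC → FC → AC := fun c d => (c, d, i0, ⟨2, by norm_num⟩) with hlttC
  set memC : FC → κ.ord.ToType → AC := fun c δ => (c, c, δ, ⟨3, by norm_num⟩) with hmemC
  set regCd : FC → AC := fun c => (c, c, i0, ⟨4, by norm_num⟩) with hregCd
  set sngCd : FC → AC := fun c => (c, c, i0, ⟨5, by norm_num⟩) with hsngCd
  set sucCd : FC → AC := fun c => (c, c, i0, ⟨6, by norm_num⟩) with hsucCd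
  have hdecA0 : ∀ c δ, decA (fibC c δ) = {α | dF c α = ovo κ.ord δ} := fun _ _ => rfl
  have hdecA1 : ∀ c ξ, decA (abvC c ξ) = {α | ovo κ.ord ξ < dF c α} := fun _ _ => rfl
  have hdecA2 : ∀ c d, decA (lttC c d) = {α | dF c α < dF d α} := fun _ _ => rfl
  have hdecA3 : ∀ c δ, decA (memC c δ) = {α | ovo κ.ord δ ∈ W (dF c α)} := fun _ _ => rfl
  have hdecA4 : ∀ c, decA (regCd c) = {α | Order.IsSuccLimit (dF c α) ∧ RegC (dF c α)} := fun _ => rfl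
  have hdecA5 : ∀ c, decA (sngCd c) = {α | Order.IsSuccLimit (dF c α) ∧ ¬ RegC (dF c α)} := fun _ => rfl
  have hdecA6 : ∀ c, decA (sucCd c) = {α | ¬ Order.IsSuccLimit (dF c α) ∧ dF c α ≠ 0} := fun _ => rfl
  -- `AC` is small
  have hmulle : ∀ a b : Cardinal, a ≤ κ → b ≤ κ → a * b ≤ κ := by
    intro a b ha hb
    calc a * b ≤ max (max a b) ℵ₀ := Cardinal.mul_le_max a b
      _ ≤ κ := max_le (max_le ha hb) hℵ
  have hACle : #AC ≤ κ := by
    have h1 : #FC ≤ κ := by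
      calc #FC ≤ max ℵ₀ #(Option κ.ord.ToType) := Cardinal.mk_list_le_max _
        _ ≤ κ := by
          rw [Cardinal.mk_option, Cardinal.mk_toType, Cardinal.card_ord,
            Cardinal.add_one_eq hℵ]
          exact max_le hℵ le_rfl
    have h2 : #(κ.ord.ToType × Fin 8) ≤ κ := by
      rw [Cardinal.mk_prod, Cardinal.lift_id, Cardinal.lift_id, Cardinal.mk_toType,
        Cardinal.card_ord]
      exact hmulle _ _ le_rfl (by
        rw [Cardinal.mk_fintype]
        simp only [Fintype.card_fin]
        exact le_trans (le_of_lt (Cardinal.nat_lt_aleph0 8)) hℵ)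
    have h3 : #(FC × κ.ord.ToType × Fin 8) ≤ κ := by
      rw [Cardinal.mk_prod, Cardinal.lift_id, Cardinal.lift_id]
      exact hmulle _ _ h1 h2
    rw [hAC]
    rw [Cardinal.mk_prod, Cardinal.lift_id, Cardinal.lift_id]
    exact hmulle _ _ h1 h3
  -- enumerate `AC` by `κ.ord.ToType`
  have hembE : Nonempty (AC ↪ κ.ord.ToType) := by
    rw [← Cardinal.le_def, Cardinal.mk_toType, Cardinal.card_ord]
    exact hACle
  set emb : AC ↪ κ.ord.ToType := Classical.choice hembE with hemb
  set A : κ.ord.ToType → Set Ordinal := fun i =>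
    if h : ∃ c : AC, emb c = i then decA h.choose else ∅ with hA
  have hAemb : ∀ c : AC, A (emb c) = decA c := by
    intro c
    have hex : ∃ c' : AC, emb c' = emb c := ⟨c, rfl⟩
    rw [hA]
    simp only [dif_pos hex]
    exact congrArg decA (emb.injective hex.choose_spec)
  obtain ⟨dec, hdec⟩ := exists_decision hreg hκ hsl htp A
  set Tru : AC → Prop := fun c => dec (emb c) = true with hTru
  -- master pick
  have hPick : ∀ (ι : Type) (j : ι → AC), #ι < κ → ∀ G : Set Ordinal, IsClubBelow G κ.ord →
      ∃ α ∈ G, α < κ.ord ∧ ∀ i, (α ∈ decA (j i) ↔ Tru (j i)) := by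
    intro ι j hι G hG
    have hst := hdec ι (fun i => emb (j i)) hι
    obtain ⟨α, hα1, hα2⟩ := hst G hG
    refine ⟨α, hα2, hG.1 hα2, fun i => ?_⟩
    have := hα1 i
    rwa [hAemb (j i)] at this
  -- derivation helper
  have hDer : ∀ (ι : Type) (j : ι → AC), #ι < κ →
      ∀ (c : AC) (G : Set Ordinal), IsClubBelow G κ.ord →
      (∀ α ∈ G, α < κ.ord → (∀ i, (α ∈ decA (j i) ↔ Tru (j i))) → α ∈ decA c) →
      Tru c := by
    intro ι j hι c G hG hpt
    by_contra hfalse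
    have hsmall : #(Option ι) < κ := by
      rw [Cardinal.mk_option]
      exact Cardinal.add_lt_of_lt hℵ hι (lt_of_lt_of_le Cardinal.one_lt_aleph0 hℵ)
    obtain ⟨α, hαG, hαΘ, hα⟩ := hPick (Option ι) (fun i => i.elim c j) hsmall G hG
    have h1 : ∀ i, α ∈ decA (j i) ↔ Tru (j i) := fun i => hα (some i)
    have h2 : α ∈ decA c ↔ Tru c := hα none
    exact hfalse (h2.1 (hpt α hαG hαΘ h1))
  -- small index type facts
  have hsmallFin : ∀ n : ℕ, #(Fin n) < κ := by
    intro n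
    rw [Cardinal.mk_fintype]
    simp only [Fintype.card_fin]
    exact lt_of_lt_of_le (Cardinal.nat_lt_aleph0 n) hℵ
  have hsmallB : #Bool < κ := by
    rw [Cardinal.mk_fintype]
    simp only [Fintype.card_bool]
    exact lt_of_lt_of_le (Cardinal.nat_lt_aleph0 2) hℵ
  have hsmallOB : #(Option Bool) < κ := by
    rw [Cardinal.mk_option]
    exact Cardinal.add_lt_of_lt hℵ hsmallB (lt_of_lt_of_le Cardinal.one_lt_aleph0 hℵ)
  have hsmallOOB : #(Option (Option Bool)) < κ := by
    rw [Cardinal.mk_option]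
    exact Cardinal.add_lt_of_lt hℵ hsmallOB (lt_of_lt_of_le Cardinal.one_lt_aleph0 hℵ)
  -- the class of codes denoting functions above all constants
  set Cgood : Set FC := {c | ∀ ξ : κ.ord.ToType, Tru (abvC c ξ)} with hCgood
  have hid : ([] : List (Option κ.ord.ToType)) ∈ Cgood := by
    intro ξ
    apply hDer Bool (fun _ => abvC [] ξ) hsmallB _ _ (club_Ioo hℵ (ovo_lt _ ξ))
    intro α hαG hαΘ _
    rw [hdecA1]
    show ovo κ.ord ξ < dF [] α
    rw [hdFnil]
    exact hαG.1
  set rF : FC → FC → Prop := fun c d => Tru (lttC c d) with hrF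
  have hmin : ∃ f0 ∈ Cgood, ∀ d ∈ Cgood, ¬ rF d f0 := by
    by_contra hcon
    push_neg at hcon
    have step : ∀ c : {c : FC // c ∈ Cgood}, ∃ d : {c : FC // c ∈ Cgood}, rF d.1 c.1 := by
      intro c
      obtain ⟨d, hd1, hd2⟩ := hcon c.1 c.2
      exact ⟨⟨d, hd1⟩, hd2⟩
    choose stp hstp using step
    set sq : ℕ → {c : FC // c ∈ Cgood} := fun n => Nat.rec ⟨[], hid⟩ (fun _ x => stp x) n with hsq
    have hsqS : ∀ n, rF (sq (n + 1)).1 (sq n).1 := fun n => hstp (sq n)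
    have hmkN : #ℕ < κ := by rw [Cardinal.mk_nat]; exact hκ
    obtain ⟨α, hαG, hαΘ, hα⟩ := hPick ℕ (fun n => lttC (sq (n + 1)).1 (sq n).1) hmkN _ (club_Iio hℵ)
    have hdesc : ∀ n, dF (sq (n + 1)).1 α < dF (sq n).1 α := by
      intro n
      have := (hα n).2 (hsqS n)
      rwa [hdecA2] at this
    set v : ℕ → Ordinal := fun n => dF (sq n).1 α with hv
    have hne : (Set.range v).Nonempty := ⟨v 0, ⟨0, rfl⟩⟩
    obtain ⟨n0, hn0⟩ := Ordinal.lt_wf.min_mem (Set.range v) hne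
    exact Ordinal.lt_wf.not_lt_min (Set.range v) ⟨n0 + 1, rfl⟩ (hn0 ▸ hdesc n0)
  obtain ⟨f0, hf0C, hf0min⟩ := hmin
  -- codes not above all constants are constant somewhere
  have hconst : ∀ c : FC, c ∉ Cgood → ∃ δ : κ.ord.ToType, Tru (fibC c δ) := by
    intro c hc
    rw [hCgood] at hc
    obtain ⟨ξ, hξ⟩ := not_forall.1 hc
    by_contra hall
    push_neg at hall
    have hsb : #(Option {i : κ.ord.ToType // ovo κ.ord i < ovo κ.ord ξ + 1}) < κ := by
      rw [Cardinal.mk_option, mk_initialSeg (succ_lt' hlim (ovo_lt _ ξ))]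
      exact Cardinal.add_lt_of_lt hℵ (Cardinal.lt_ord.1 (succ_lt' hlim (ovo_lt _ ξ)))
        (lt_of_lt_of_le Cardinal.one_lt_aleph0 hℵ)
    obtain ⟨α, hαG, hαΘ, hα⟩ := hPick
      (Option {i : κ.ord.ToType // ovo κ.ord i < ovo κ.ord ξ + 1})
      (fun i => i.elim (abvC c ξ) (fun i => fibC c i.1)) hsb _ (club_Iio hℵ)
    have h1 : ¬ ovo κ.ord ξ < dF c α := by
      intro h
      have hmem : α ∈ decA (abvC c ξ) := by rw [hdecA1]; exact h
      exact hξ ((hα none).1 hmem)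
    have h2 : dF c α < κ.ord := lt_of_le_of_lt (hdFle c α) hαΘ
    set δv : κ.ord.ToType := ((Ordinal.ToType.mk (o := κ.ord))) ⟨dF c α, h2⟩ with hδv
    have h3 : ovo κ.ord δv = dF c α := ovo_enum _ _ _
    have h4 : ovo κ.ord δv < ovo κ.ord ξ + 1 := by
      rw [h3]
      exact lt_of_le_of_lt (not_lt.1 h1) (lt_add_one' _)
    have h5 : α ∈ decA (fibC c δv) := by rw [hdecA0]; exact h3.symm
    exact hall δv ((hα (some ⟨δv, h4⟩)).1 h5)
  have hminlt : ∀ d : FC, Tru (lttC d f0) → ∃ δ, Tru (fibC d δ) := by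
    intro d hd
    by_cases hdC : d ∈ Cgood
    · exact absurd hd (hf0min d hdC)
    · exact hconst d hdC
  have hfibabs : ∀ δ, Tru (fibC f0 δ) → False := by
    intro δ h
    obtain ⟨α, _, _, hα⟩ := hPick Bool (fun b => if b then fibC f0 δ else abvC f0 δ)
      hsmallB _ (club_Iio hℵ)
    have e1 : α ∈ decA (fibC f0 δ) ↔ Tru (fibC f0 δ) := hα true
    have e2 : α ∈ decA (abvC f0 δ) ↔ Tru (abvC f0 δ) := hα false
    have h1 : dF f0 α = ovo κ.ord δ := by
      have := e1.2 h; rwa [hdecA0] at this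
    have h2 : ovo κ.ord δ < dF f0 α := by
      have := e2.2 (hf0C δ); rwa [hdecA1] at this
    rw [h1] at h2; exact lt_irrefl _ h2
  -- the shape of f0 : regular-limit or singular-limit
  have hzer0 : (0 : Ordinal) < κ.ord := hreg.ord_pos
  set δ0 : κ.ord.ToType := ((Ordinal.ToType.mk (o := κ.ord))) ⟨0, hzer0⟩ with hδ0
  have hδ0v : ovo κ.ord δ0 = 0 := ovo_enum _ _ _
  have hcover : Tru (regCd f0) ∨ Tru (sngCd f0) := by
    by_contra hnot
    push_neg at hnot
    have hsuc : ¬ Tru (sucCd f0) := by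
      intro hsT
      have hglt : Tru (lttC (none :: f0) f0) := by
        apply hDer Bool (fun _ => sucCd f0) hsmallB _ _ (club_Iio hℵ)
        intro α hαG hαΘ hα
        have hshape : α ∈ decA (sucCd f0) := (hα true).2 hsT
        rw [hdecA6] at hshape
        rw [hdecA2]
        show dF (none :: f0) α < dF f0 α
        rw [hdFpred]
        rcases Ordinal.zero_or_succ_or_isSuccLimit (dF f0 α) with h | ⟨b, hb⟩ | h
        · exact absurd h hshape.2
        · rw [← hb, Ordinal.pred_succ]
          exact Order.lt_succ b
        · exact absurd h hshape.1
      obtain ⟨δb, hδb⟩ := hminlt _ hglt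
      have hsuccΘ : ovo κ.ord δb + 1 < κ.ord := succ_lt' hlim (ovo_lt _ δb)
      set δb1 := ((Ordinal.ToType.mk (o := κ.ord))) ⟨ovo κ.ord δb + 1, hsuccΘ⟩ with hδb1
      have hfib : Tru (fibC f0 δb1) := by
        apply hDer Bool (fun b => if b then sucCd f0 else fibC (none :: f0) δb)
          hsmallB _ _ (club_Iio hℵ)
        intro α hαG hαΘ hα
        have hshape : α ∈ decA (sucCd f0) := (hα true).2 hsT
        rw [hdecA6] at hshape
        have hpredv : α ∈ decA (fibC (none :: f0) δb) := (hα false).2 hδb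
        rw [hdecA0] at hpredv
        rw [hdecA0]
        show dF f0 α = ovo κ.ord δb1
        rw [show ovo κ.ord δb1 = ovo κ.ord δb + 1 from ovo_enum _ _ _]
        rcases Ordinal.zero_or_succ_or_isSuccLimit (dF f0 α) with h | ⟨b, hb⟩ | h
        · exact absurd h hshape.2
        · have hpred : Ordinal.pred (dF f0 α) = ovo κ.ord δb := by
            rw [← hdFpred]; exact hpredv
          rw [← hb] at hpred ⊢
          rw [Ordinal.pred_succ] at hpred
          rw [← hpred, Ordinal.add_one_eq_succ]
        · exact absurd h hshape.1
      exact hfibabs δb1 hfib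
    have hzer : ¬ Tru (fibC f0 δ0) := fun h => hfibabs δ0 h
    obtain ⟨α, _, hαΘ, hα⟩ := hPick (Option (Option Bool))
      (fun i => i.elim (fibC f0 δ0)
        (fun j => j.elim (sucCd f0) (fun b => if b then regCd f0 else sngCd f0)))
      hsmallOOB _ (club_Iio hℵ)
    rcases Ordinal.zero_or_succ_or_isSuccLimit (dF f0 α) with h | ⟨b, hb⟩ | h
    · refine hzer ((hα none).1 ?_)
      show dF f0 α = ovo κ.ord δ0
      rw [hδ0v]; exact h
    · refine hsuc ((hα (some none)).1 ?_)
      show ¬ Order.IsSuccLimit (dF f0 α) ∧ dF f0 α ≠ 0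
      exact ⟨by rw [← hb]; exact Order.not_isSuccLimit_succ b,
        by rw [← hb]; exact Ordinal.succ_ne_zero b⟩
    · by_cases hr : RegC (dF f0 α)
      · refine hnot.1 ((hα (some (some true))).1 ?_)
        show Order.IsSuccLimit (dF f0 α) ∧ RegC (dF f0 α)
        exact ⟨h, hr⟩
      · refine hnot.2 ((hα (some (some false))).1 ?_)
        show Order.IsSuccLimit (dF f0 α) ∧ ¬ RegC (dF f0 α)
        exact ⟨h, hr⟩
  -- the decoded unbounded set
  set D : Set Ordinal := {x | ∃ h : x < κ.ord,
    Tru (memC f0 (((Ordinal.ToType.mk (o := κ.ord))) ⟨x, h⟩))} with hD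
  have hDunb : ∀ tag : AC, Tru tag →
      (∀ α, α ∈ decA tag → Order.IsSuccLimit (dF f0 α)) →
      ∀ a, a < κ.ord → ∃ δ ∈ D, a < δ ∧ δ < κ.ord := by
    intro tag htag hlimtag a ha
    have haΘ : a + 1 < κ.ord := succ_lt' hlim ha
    set aI := ((Ordinal.ToType.mk (o := κ.ord))) ⟨a, ha⟩ with haI
    have haIv : ovo κ.ord aI = a := ovo_enum _ _ _
    set a1I := ((Ordinal.ToType.mk (o := κ.ord))) ⟨a + 1, haΘ⟩ with ha1I
    have ha1Iv : ovo κ.ord a1I = a + 1 := ovo_enum _ _ _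
    set g : FC := some aI :: f0 with hgdef
    have hsetup : ∀ α, α < κ.ord → α ∈ decA tag → α ∈ decA (abvC f0 a1I) →
        {x | x ∈ W (dF f0 α) ∧ ovo κ.ord aI < x}.Nonempty ∧ dF g α < dF f0 α := by
      intro α hαΘ h1 h2
      have hlima : Order.IsSuccLimit (dF f0 α) := hlimtag α h1
      rw [hdecA1] at h2
      have h2' : a + 1 < dF f0 α := by
        have := h2
        rwa [Set.mem_setOf_eq, ha1Iv] at this
      have hfΘ : dF f0 α < κ.ord := lt_of_le_of_lt (hdFle f0 α) hαΘ
      obtain ⟨x, hxW, hax⟩ := hWunb (dF f0 α) hfΘ hlima a (lt_trans (lt_add_one' a) h2')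
      have hne : {x | x ∈ W (dF f0 α) ∧ ovo κ.ord aI < x}.Nonempty :=
        ⟨x, hxW, by rw [haIv]; exact hax⟩
      refine ⟨hne, ?_⟩
      show dF g α < dF f0 α
      rw [hgdef, hdFinf]
      exact hWsub _ (csInf_mem hne).1
    have h1 : Tru (lttC g f0) := by
      apply hDer Bool (fun b => if b then tag else abvC f0 a1I) hsmallB _ _ (club_Iio hℵ)
      intro α hαG hαΘ hα
      have hs := hsetup α hαΘ ((hα true).2 htag) ((hα false).2 (hf0C a1I))
      rw [hdecA2]
      exact hs.2
    obtain ⟨δb, hδb⟩ := hminlt g h1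
    have h2 : Tru (memC f0 δb) := by
      apply hDer (Option Bool)
        (fun i => i.elim (fibC g δb) (fun b => if b then tag else abvC f0 a1I))
        hsmallOB _ _ (club_Iio hℵ)
      intro α hαG hαΘ hα
      obtain ⟨hne, _⟩ := hsetup α hαΘ ((hα (some true)).2 htag) ((hα (some false)).2 (hf0C a1I))
      have hgv : dF g α = ovo κ.ord δb := (hα none).2 hδb
      rw [hdecA3]
      show ovo κ.ord δb ∈ W (dF f0 α)
      rw [← hgv, hgdef, hdFinf]
      exact (csInf_mem hne).1
    have h3 : a < ovo κ.ord δb := by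
      obtain ⟨α, _, hαΘ, hα⟩ := hPick (Option Bool)
        (fun i => i.elim (fibC g δb) (fun b => if b then tag else abvC f0 a1I))
        hsmallOB _ (club_Iio hℵ)
      obtain ⟨hne, _⟩ := hsetup α hαΘ ((hα (some true)).2 htag) ((hα (some false)).2 (hf0C a1I))
      have hgv : dF g α = ovo κ.ord δb := (hα none).2 hδb
      have hmm : ovo κ.ord aI < dF g α := by
        rw [hgdef, hdFinf]
        exact (csInf_mem hne).2
      rw [hgv, haIv] at hmm
      exact hmm
    refine ⟨ovo κ.ord δb, ?_, h3, ovo_lt _ δb⟩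
    rw [hD]
    refine ⟨ovo_lt _ δb, ?_⟩
    rw [ovo_enum_inv]
    exact h2
  rcases hcover with hREG | hSNG
  · -- regular branch : contradiction with stationarity of S
    have hDu := hDunb (regCd f0) hREG (fun α h => by rw [hdecA4] at h; exact h.1)
    have hacc := club_accBelow hreg hκ hDu
    obtain ⟨σ, hσS, hσacc⟩ := hstat _ hacc
    obtain ⟨hσΘ, hσ0, hσap⟩ := hσacc
    have hsmallσ : #(σ.ToType ⊕ Bool) < κ := by
      rw [Cardinal.mk_sum, Cardinal.lift_id, Cardinal.lift_id, Cardinal.mk_toType]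
      exact Cardinal.add_lt_of_lt hℵ (Cardinal.lt_ord.1 hσΘ) hsmallB
    set σI := ((Ordinal.ToType.mk (o := κ.ord))) ⟨σ, hσΘ⟩ with hσI
    have hσIv : ovo κ.ord σI = σ := ovo_enum _ _ _
    set jb : σ.ToType ⊕ Bool → AC := fun i => i.elim
      (fun x => if h : ovo σ x ∈ D then
          memC f0 (((Ordinal.ToType.mk (o := κ.ord))) ⟨ovo σ x, lt_trans (ovo_lt σ x) hσΘ⟩)
        else abvC f0 i0)
      (fun b => if b then regCd f0 else abvC f0 σI) with hjb
    obtain ⟨β, _, hβΘ, hβ⟩ := hPick _ jb hsmallσ _ (club_Iio hℵ)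
    set αr := dF f0 β with hαr
    have hshape : Order.IsSuccLimit αr ∧ RegC αr := (hβ (Sum.inr true)).2 hREG
    have hσαr : σ < αr := by
      have h2 : ovo κ.ord σI < dF f0 β := (hβ (Sum.inr false)).2 (hf0C σI)
      rwa [hσIv] at h2
    have hαrΘ : αr < κ.ord := lt_of_le_of_lt (hdFle f0 β) hβΘ
    have hsubW : ∀ δ, δ ∈ D → δ < σ → δ ∈ W αr := by
      intro δ hδD hδσ
      set x := ((Ordinal.ToType.mk (o := σ))) ⟨δ, hδσ⟩ with hx
      have hxv : ovo σ x = δ := ovo_enum _ _ _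
      have h1 := hβ (Sum.inl x)
      rw [hjb] at h1
      simp only [Sum.elim_inl, hxv, dif_pos hδD] at h1
      obtain ⟨hh, hT⟩ := hδD
      have h2 := h1.2 hT
      rw [hdecA3] at h2
      simp only [Set.mem_setOf_eq, ovo_enum] at h2
      rwa [ovo_enum κ.ord δ (lt_trans hδσ hσΘ)] at h2
    have hEαr := hE αr hαrΘ hshape.2
    have hσE : σ ∈ E αr := by
      apply hEαr.1.2.2 σ hσαr hσ0
      intro b hb
      obtain ⟨δ, hδD, hbδ, hδσ⟩ := hσap b hb
      have hδW : δ ∈ W αr := hsubW δ hδD hδσ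
      rw [hWreg αr hαrΘ hshape.2] at hδW
      exact ⟨δ, hδW, hbδ, hδσ⟩
    have hfin : σ ∈ E αr ∩ S := ⟨hσE, hσS⟩
    rw [hEαr.2] at hfin
    exact hfin
  · -- singular branch : cardinality contradiction
    have hDu := hDunb (sngCd f0) hSNG (fun α h => by rw [hdecA5] at h; exact h.1)
    obtain ⟨z, hzD, _, hzΘ⟩ := hDu 0 hzer0
    set μ := Order.succ z.card with hμ
    have hμκ : μ < κ := lt_of_le_of_lt (Order.succ_le_of_lt (Cardinal.cantor z.card))
      (hsl _ (Cardinal.lt_ord.1 hzΘ))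
    have hμcard : #(μ.ord.ToType) = μ := by rw [Cardinal.mk_toType, Cardinal.card_ord]
    have hwfζ : WellFounded ((· < ·) : μ.ord.ToType → μ.ord.ToType → Prop) :=
      IsWellFounded.wf
    set ζ : μ.ord.ToType → Ordinal := hwfζ.fix (fun x IH =>
      sInf (D ∩ Set.Ioi (max z (⨆ y : {y : μ.ord.ToType // y < x}, IH y.1 y.2)))) with hζ
    have hζeq : ∀ x, ζ x =
        sInf (D ∩ Set.Ioi (max z (⨆ y : {y : μ.ord.ToType // y < x}, ζ y.1))) := by
      intro x
      rw [hζ, WellFounded.fix_eq]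
    have hζmain : ∀ x, ζ x ∈ D ∧ z < ζ x ∧ ζ x < κ.ord ∧ ∀ y, y < x → ζ y < ζ x := by
      intro x
      induction x using WellFounded.induction hwfζ with
      | _ x IH =>
        have hsupb : (⨆ y : {y : μ.ord.ToType // y < x}, ζ y.1) < κ.ord := by
          have hcl : #{y : μ.ord.ToType // y < x} < κ.ord.cof := by
            rw [hcof]
            calc #{y : μ.ord.ToType // y < x} ≤ #(μ.ord.ToType) := Cardinal.mk_subtype_le _
              _ = μ := hμcard
              _ < κ := hμκ
          exact Ordinal.iSup_lt_ord hcl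
            (fun y : {y : μ.ord.ToType // y < x} => (IH y.1 y.2).2.2.1)
        have hbnd : max z (⨆ y : {y : μ.ord.ToType // y < x}, ζ y.1) < κ.ord :=
          max_lt hzΘ hsupb
        obtain ⟨δ, hδD, hδgt, hδΘ⟩ := hDu _ hbnd
        have hne : (D ∩ Set.Ioi (max z (⨆ y : {y : μ.ord.ToType // y < x}, ζ y.1))).Nonempty :=
          ⟨δ, hδD, hδgt⟩
        have hm := csInf_mem hne
        rw [← hζeq x] at hm
        obtain ⟨hmD, hmgt⟩ := hm
        refine ⟨hmD, lt_of_le_of_lt (le_max_left _ _) hmgt, ?_, ?_⟩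
        · obtain ⟨hh, _⟩ := hmD
          exact hh
        · intro y hy
          exact lt_of_le_of_lt (le_trans
            (Ordinal.le_iSup (fun y : {y : μ.ord.ToType // y < x} => ζ y.1) ⟨y, hy⟩)
            (le_max_right _ _)) hmgt
    have hζinj : Function.Injective ζ := by
      intro x y hxy
      rcases lt_trichotomy x y with h | h | h
      · exact absurd (hxy ▸ (hζmain y).2.2.2 x h) (lt_irrefl _)
      · exact h
      · exact absurd (hxy ▸ (hζmain x).2.2.2 y h) (lt_irrefl _)
    have hzI : ∀ x : μ.ord.ToType, ζ x < κ.ord := fun x => (hζmain x).2.2.1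
    have hsmallμ : #(μ.ord.ToType ⊕ Bool) < κ := by
      rw [Cardinal.mk_sum, Cardinal.lift_id, Cardinal.lift_id, hμcard]
      exact Cardinal.add_lt_of_lt hℵ hμκ hsmallB
    set jb : μ.ord.ToType ⊕ Bool → AC := fun i => i.elim
      (fun x => memC f0 (((Ordinal.ToType.mk (o := κ.ord))) ⟨ζ x, hzI x⟩))
      (fun b => if b then sngCd f0
        else memC f0 (((Ordinal.ToType.mk (o := κ.ord))) ⟨z, hzΘ⟩)) with hjb
    obtain ⟨β, _, hβΘ, hβ⟩ := hPick _ jb hsmallμ _ (club_Iio hℵ)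
    set αs := dF f0 β with hαs
    have hshape : Order.IsSuccLimit αs ∧ ¬ RegC αs := (hβ (Sum.inr true)).2 hSNG
    have hzW : z ∈ W αs := by
      obtain ⟨hh, hT⟩ := hzD
      have h2 : ovo κ.ord (((Ordinal.ToType.mk (o := κ.ord))) ⟨z, hzΘ⟩) ∈ W (dF f0 β) :=
        (hβ (Sum.inr false)).2 hT
      rwa [ovo_enum] at h2
    have hζW : ∀ x, ζ x ∈ W αs := by
      intro x
      obtain ⟨hh, hT⟩ := (hζmain x).1
      have h2 : ovo κ.ord (((Ordinal.ToType.mk (o := κ.ord))) ⟨ζ x, hzI x⟩) ∈ W (dF f0 β) :=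
        (hβ (Sum.inl x)).2 hT
      rwa [ovo_enum] at h2
    rw [hWsing αs hshape.2] at hzW
    have hζW' : ∀ x, (∃ i, ff αs i = ζ x) := by
      intro x
      have := hζW x
      rw [hWsing αs hshape.2] at this
      exact this.1
    choose inj hinj using hζW'
    have hinjInj : Function.Injective inj := by
      intro x y h
      apply hζinj
      rw [← hinj x, ← hinj y, h]
    have hcard1 : μ ≤ αs.cof := by
      rw [← hμcard, ← hffc αs]
      exact Cardinal.mk_le_of_injective hinjInj
    have hcard2 : αs.cof ≤ z.card := by
      calc αs.cof = αs.cof.ord.card := (Cardinal.card_ord _).symm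
        _ ≤ z.card := Ordinal.card_le_card hzW.2
    have hfin : μ ≤ z.card := le_trans hcard1 hcard2
    rw [hμ] at hfin
    exact absurd hfin (not_le.2 (Order.lt_succ _))

end

end SRProof

/-- If `κ` is weakly compact, then every stationary subset of `κ` reflects at some
regular `α < κ`. -/
theorem stationary_reflection_of_weaklyCompact (κ : Cardinal.{0})
    (hwc : WeaklyCompact κ) (S : Set Ordinal) (hS : S ⊆ Set.Iio κ.ord)
    (hstat : IsStationaryBelow S κ.ord) :
    ∃ α < κ.ord, α.card.ord = α ∧ α.card.IsRegular ∧
      IsStationaryBelow (S ∩ Set.Iio α) α :=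
  SRProof.main κ ⟨⟨hwc.1.2.1, hwc.1.1, hwc.1.2.2⟩, hwc.2⟩ S hS hstat
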